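/- arXiv:1411.6332 — 2 statements merged into one kernel-verified Lean document; each statement's English description precedes it below -/
import Mathlib

section
/- Let p > 1 and let φ : ℝ → ℝ be continuously differentiable with φ ∈ L²(ℝ), φ′ ∈ L^{p+1}(ℝ), and φ(x) → 0 as x → −∞. Then sup_{x∈ℝ} |φ(x)| ≤ ((3p+1)/(p+1))^{(p+1)/(3p+1)} · ‖φ‖_{L²(ℝ)}^{2p/(3p+1)} · ‖φ′‖_{L^{p+1}(ℝ)}^{(p+1)/(3p+1)}. -/
open Real MeasureTheory Filter Set

theorem stmt_16 (p : ℝ) (hp : 1 < p) (φ : ℝ → ℝ) (hφ : ContDiff ℝ 1 φ)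
    (hφ2 : Integrable (fun x => (φ x) ^ 2))
    (hφ' : Integrable (fun x => |deriv φ x| ^ (p + 1)))
    (hlim : Tendsto φ atBot (nhds 0)) :
    ∀ x : ℝ, |φ x| ≤
      ((3 * p + 1) / (p + 1)) ^ ((p + 1) / (3 * p + 1))
        * ((∫ y : ℝ, (φ y) ^ 2) ^ ((1:ℝ)/2)) ^ ((2 * p) / (3 * p + 1))
        * ((∫ y : ℝ, |deriv φ y| ^ (p + 1)) ^ (1 / (p + 1))) ^ ((p + 1) / (3 * p + 1)) := by
  intro x₀
  have hp1 : (0:ℝ) < p + 1 := by linarith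
  have hp0 : (0:ℝ) < p := by linarith
  have h3p : (0:ℝ) < 3 * p + 1 := by linarith
  set r : ℝ := (3 * p + 1) / (p + 1) with hr_def
  have hr2 : 2 < r := by rw [hr_def, lt_div_iff₀ hp1]; linarith
  have hr0 : 0 < r := by linarith
  have hr1 : r - 1 = 2 * p / (p + 1) := by rw [hr_def]; field_simp; ring
  have hrmul : (p + 1) * r = 3 * p + 1 := by rw [hr_def]; field_simp
  have cφ : Continuous φ := hφ.continuous
  have cφ' : Continuous (deriv φ) := hφ.continuous_deriv le_rfl
  -- MemLp facts
  have hne2 : ENNReal.ofReal 2 ≠ 0 := by simp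
  have hnt2 : ENNReal.ofReal 2 ≠ ⊤ := ENNReal.ofReal_ne_top
  have hnep : ENNReal.ofReal (p+1) ≠ 0 := by
    simp [ENNReal.ofReal_eq_zero]; linarith
  have hntp : ENNReal.ofReal (p+1) ≠ ⊤ := ENNReal.ofReal_ne_top
  have Mφ2 : MemLp φ (ENNReal.ofReal 2) volume := by
    refine (memLp_norm_rpow_iff cφ.aestronglyMeasurable hne2 hnt2).mp ?_
    rw [ENNReal.div_self hne2 hnt2, memLp_one_iff_integrable]
    convert hφ2 using 1
    · rfl
    funext x
    rw [ENNReal.toReal_ofReal (by norm_num), Real.norm_eq_abs, Real.rpow_two, sq_abs]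
  have Mg0 : MemLp (deriv φ) (ENNReal.ofReal (p+1)) volume := by
    refine (memLp_norm_rpow_iff cφ'.aestronglyMeasurable hnep hntp).mp ?_
    rw [ENNReal.div_self hnep hntp, memLp_one_iff_integrable]
    convert hφ' using 1
    · rfl
    funext x
    rw [ENNReal.toReal_ofReal hp1.le, Real.norm_eq_abs]
  have Mg : MemLp (fun x => |deriv φ x|) (ENNReal.ofReal (p+1)) volume := by
    have := (memLp_norm_iff cφ'.aestronglyMeasurable).mpr Mg0
    simpa [Real.norm_eq_abs] using this
  have Mf : MemLp (fun x => |φ x| ^ (r-1)) (ENNReal.ofReal ((p+1)/p)) volume := by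
    have := Mφ2.norm_rpow_div (ENNReal.ofReal (r-1))
    have he : ENNReal.ofReal 2 / ENNReal.ofReal (r-1) = ENNReal.ofReal ((p+1)/p) := by
      rw [← ENNReal.ofReal_div_of_pos (by linarith)]
      congr 1
      rw [hr1]; field_simp
    rw [he] at this
    convert this using 1
    funext x
    rw [ENNReal.toReal_ofReal (by linarith), Real.norm_eq_abs]
  -- Hölder
  have hpq : ((p+1)/p).HolderConjugate (p+1) := by
    rw [Real.holderConjugate_iff]
    constructor
    · rw [lt_div_iff₀ hp0]; linarith
    · rw [inv_div]; field_simp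
  have key := integral_mul_le_Lp_mul_Lq_of_nonneg (μ := volume) hpq
    (f := fun x => |φ x| ^ (r-1)) (g := fun x => |deriv φ x|)
    (Eventually.of_forall fun x => by positivity)
    (Eventually.of_forall fun x => abs_nonneg _) Mf Mg
  have hinner : (fun y => (|φ y| ^ (r-1)) ^ ((p+1)/p)) = fun y => (φ y) ^ 2 := by
    funext y
    rw [← Real.rpow_mul (abs_nonneg _)]
    have : (r - 1) * ((p+1)/p) = 2 := by rw [hr1]; field_simp
    rw [this, Real.rpow_two, sq_abs]
  rw [hinner] at key
  -- the integrable product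
  have Iprod : Integrable (fun y => |φ y| ^ (r-1) * |deriv φ y|) := by
    have hsum : (1:ENNReal) / 1 = 1 / ENNReal.ofReal ((p+1)/p) + 1 / ENNReal.ofReal (p+1) := by
      rw [one_div, one_div, one_div, ← ENNReal.ofReal_inv_of_pos (by positivity),
        ← ENNReal.ofReal_inv_of_pos hp1, ← ENNReal.ofReal_add (by positivity) (by positivity),
        inv_div, inv_one, ← ENNReal.ofReal_one]
      congr 1
      field_simp
    haveI : ENNReal.HolderTriple (ENNReal.ofReal ((p+1)/p)) (ENNReal.ofReal (p+1)) 1 :=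
      ⟨by simpa only [one_div] using hsum.symm⟩
    have := MemLp.smul (𝕜 := ℝ) (r := 1) Mg Mf
    rw [memLp_one_iff_integrable] at this
    simpa [smul_eq_mul, Pi.mul_def] using this
  -- the derivative function
  set h : ℝ → ℝ := fun y => r/2 * (φ y ^ 2) ^ (r/2 - 1) * (2 * φ y ^ 1 * deriv φ y) with hh_def
  have habs : ∀ y, |h y| = r * (|φ y| ^ (r-1) * |deriv φ y|) := by
    intro y
    rcases eq_or_ne (φ y) 0 with h0 | h0
    · simp [hh_def, h0, Real.zero_rpow (show r - 1 ≠ 0 by intro hc; rw [sub_eq_zero] at hc; linarith)]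
    · have hφpos : 0 < |φ y| := abs_pos.mpr h0
      have e1 : (φ y ^ 2) ^ (r/2-1) = |φ y| ^ (r-2) := by
        rw [← sq_abs, ← Real.rpow_two, ← Real.rpow_mul (abs_nonneg _)]
        congr 1; ring
      have e2 : |φ y| ^ (r-2) * |φ y| = |φ y| ^ (r-1) := by
        nth_rewrite 2 [show |φ y| = |φ y| ^ (1:ℝ) by rw [Real.rpow_one]]
        rw [← Real.rpow_add hφpos]
        congr 1; ring
      have lhs : |h y| = r/2 * |φ y| ^ (r-2) * (2 * |φ y| * |deriv φ y|) := by
        rw [hh_def]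
        simp only [abs_mul, pow_one]
        rw [abs_of_nonneg (show (0:ℝ) ≤ r/2 by linarith),
          abs_of_nonneg (Real.rpow_nonneg (sq_nonneg _) _), e1, abs_two]
      rw [lhs, ← e2]; ring
  have Ih : Integrable h := by
    refine (Iprod.const_mul r).mono' ?_ (Eventually.of_forall fun y => ?_)
    · exact ((continuous_const.mul ((cφ.pow 2).rpow_const
        (fun y => Or.inr (by linarith)))).mul
        ((continuous_const.mul (cφ.pow 1)).mul cφ')).aestronglyMeasurable
    · rw [Real.norm_eq_abs, habs y]
  have hderiv : ∀ y : ℝ, HasDerivAt (fun z => (φ z ^ 2) ^ (r/2)) (h y) y := by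
    intro y
    have h1 : HasDerivAt (fun z => φ z ^ 2) ((2:ℝ) * φ y ^ 1 * deriv φ y) y :=
      ((hφ.differentiable one_ne_zero y).hasDerivAt).pow 2
    have h2 := Real.hasDerivAt_rpow_const (x := φ y ^ 2) (p := r/2) (Or.inr (by linarith))
    exact h2.comp y h1
  have hg0 : Tendsto (fun z => (φ z ^ 2) ^ (r/2)) atBot (nhds 0) := by
    have hc : Continuous (fun t : ℝ => (t^2) ^ (r/2)) :=
      (continuous_pow 2).rpow_const (fun t => Or.inr (by linarith))
    have := (hc.tendsto 0).comp hlim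
    simpa [Function.comp_def, Real.zero_rpow (by positivity : r/2 ≠ 0)] using this
  have hFTC : ∫ y in Iic x₀, h y = (φ x₀ ^ 2) ^ (r/2) - 0 :=
    integral_Iic_of_hasDerivAt_of_tendsto' (fun y _ => hderiv y) Ih.integrableOn hg0
  -- chain of inequalities
  set A : ℝ := ∫ y : ℝ, (φ y) ^ 2 with hA_def
  set B : ℝ := ∫ y : ℝ, |deriv φ y| ^ (p+1) with hB_def
  have hA : 0 ≤ A := integral_nonneg fun y => sq_nonneg _
  have hB : 0 ≤ B := integral_nonneg fun y => Real.rpow_nonneg (abs_nonneg _) _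
  have main : (φ x₀ ^ 2) ^ (r/2) ≤ r * (A ^ (1/((p+1)/p)) * B ^ (1/(p+1))) := by
    rw [← sub_zero ((φ x₀ ^ 2) ^ (r/2)), ← hFTC]
    calc ∫ y in Iic x₀, h y ≤ ∫ y in Iic x₀, |h y| :=
          integral_mono Ih.integrableOn Ih.abs.integrableOn (fun y => le_abs_self _)
      _ ≤ ∫ y : ℝ, |h y| := setIntegral_le_integral Ih.abs
            (Eventually.of_forall fun y => abs_nonneg _)
      _ = r * ∫ y : ℝ, |φ y| ^ (r-1) * |deriv φ y| := by
            rw [← integral_const_mul]; exact integral_congr_ae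
              (Eventually.of_forall fun y => habs y)
      _ ≤ r * (A ^ (1/((p+1)/p)) * B ^ (1/(p+1))) := by
            refine mul_le_mul_of_nonneg_left ?_ hr0.le
            simpa using key
  -- final computation
  have e : (φ x₀ ^ 2) ^ (r/2) = |φ x₀| ^ r := by
    rw [← sq_abs, ← Real.rpow_two, ← Real.rpow_mul (abs_nonneg _)]
    congr 1; ring
  rw [e] at main
  have hCnn : 0 ≤ r * (A ^ (1/((p+1)/p)) * B ^ (1/(p+1))) :=
    mul_nonneg hr0.le (mul_nonneg (Real.rpow_nonneg hA _) (Real.rpow_nonneg hB _))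
  have h2 := Real.rpow_le_rpow (Real.rpow_nonneg (abs_nonneg _) _) main
    (show (0:ℝ) ≤ 1/r by positivity)
  have e3 : (|φ x₀| ^ r) ^ (1/r) = |φ x₀| := by
    rw [← Real.rpow_mul (abs_nonneg _), mul_one_div, div_self (ne_of_gt hr0), Real.rpow_one]
  rw [e3] at h2
  refine h2.trans_eq ?_
  have e4 : (1:ℝ)/((p+1)/p) = p/(p+1) := one_div_div _ _
  rw [e4, Real.mul_rpow hr0.le (mul_nonneg (Real.rpow_nonneg hA _) (Real.rpow_nonneg hB _)),
    Real.mul_rpow (Real.rpow_nonneg hA _) (Real.rpow_nonneg hB _)]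
  have eA : (A ^ (p/(p+1))) ^ (1/r) = (A ^ ((1:ℝ)/2)) ^ (2*p/(3*p+1)) := by
    rw [← Real.rpow_mul hA, ← Real.rpow_mul hA]
    congr 1
    rw [hr_def]; field_simp
  have eB : (B ^ ((1:ℝ)/(p+1))) ^ (1/r) = (B ^ ((1:ℝ)/(p+1))) ^ ((p+1)/(3*p+1)) := by
    rw [← Real.rpow_mul hB, ← Real.rpow_mul hB]
    congr 1
    rw [hr_def]; field_simp
  have er : (1:ℝ)/r = (p+1)/(3*p+1) := by rw [hr_def, one_div_div]
  rw [eA, eB, er]; ring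
end

section
/- Let p > 1 and let g : ℝ → ℝ be continuously differentiable with g(x) → 0 as |x| → ∞, and suppose ∫_{{g<0}} |g|^{2(p−1)}(g′)² dx and ∫_{{g<0}} |g|^{p+1} dx are finite, where {g<0} := {x ∈ ℝ : g(x) < 0}. Then ∫_{{g<0}} |g|^{p+2} dx ≤ ((3p+2)/2)^{2/(3p+2)} · ( ∫_{{g<0}} |g|^{2(p−1)}(g′)² dx )^{1/(3p+1)} · ( ∫_{{g<0}} |g|^{p+1} dx )^{(3p+2)/(3p+1)}. -/
open Real MeasureTheory Filter Set

lemma contRpowAux {f : ℝ → ℝ} (hf : Continuous f) (h0 : ∀ x, 0 ≤ f x) {r : ℝ} (hr : 0 < r) :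
    Continuous fun x => f x ^ r := by
  rw [continuous_iff_continuousAt]
  intro x
  exact (Real.continuousAt_rpow_const (f x) r (Or.inr hr.le)).comp hf.continuousAt

lemma phiHasDeriv {α : ℝ} (hα : 1 < α) (y : ℝ) :
    HasDerivAt (fun y : ℝ => max (-y) 0 ^ α) (-(α * max (-y) 0 ^ (α - 1))) y := by
  have hα0 : (0:ℝ) < α := by linarith
  rcases lt_trichotomy y 0 with hy | hy | hy
  · -- y < 0
    have hny : (0:ℝ) < -y := by linarith
    have h1 : HasDerivAt (fun z : ℝ => (-z) ^ α) (α * (-y) ^ (α - 1) * (-1)) y :=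
      (Real.hasDerivAt_rpow_const (x := -y) (p := α) (Or.inl (ne_of_gt hny))).comp y
        (hasDerivAt_neg y)
    have h2 : (fun z : ℝ => max (-z) 0 ^ α) =ᶠ[nhds y] fun z : ℝ => (-z) ^ α := by
      filter_upwards [eventually_lt_nhds hy] with z hz
      rw [max_eq_left (by linarith : (0:ℝ) ≤ -z)]
    have h3 := h1.congr_of_eventuallyEq h2
    have : -(α * max (-y) 0 ^ (α - 1)) = α * (-y) ^ (α - 1) * (-1) := by
      rw [max_eq_left hny.le]; ring
    rwa [this]
  · -- y = 0
    subst hy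
    have hval : -(α * max (-(0:ℝ)) 0 ^ (α - 1)) = 0 := by
      simp [Real.zero_rpow (by linarith : α - 1 ≠ 0)]
    rw [hval, hasDerivAt_iff_tendsto_slope]
    apply squeeze_zero_norm' (a := fun z : ℝ => |z| ^ (α - 1))
    · filter_upwards [self_mem_nhdsWithin] with z hz
      have hz0 : z ≠ 0 := hz
      have habs : (0:ℝ) < |z| := abs_pos.mpr hz0
      have h1 : max (-z) 0 ≤ |z| := max_le (neg_le_abs z) (abs_nonneg z)
      have h2 : max (-z) 0 ^ α ≤ |z| ^ α :=
        Real.rpow_le_rpow (le_max_right _ _) h1 hα0.le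
      have hF0 : max (-(0:ℝ)) 0 ^ α = 0 := by
        simp [Real.zero_rpow (ne_of_gt hα0)]
      rw [slope_def_field, Real.norm_eq_abs]
      have he : |(max (-z) 0 ^ α - max (-(0:ℝ)) 0 ^ α) / (z - 0)| = max (-z) 0 ^ α / |z| := by
        rw [hF0, sub_zero, sub_zero, abs_div,
          abs_of_nonneg (Real.rpow_nonneg (le_max_right _ _) α)]
      rw [he]
      calc max (-z) 0 ^ α / |z| ≤ |z| ^ α / |z| := by gcongr
        _ = |z| ^ (α - 1) := by
          rw [Real.rpow_sub habs, Real.rpow_one]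
    · have hcont : ContinuousAt (fun z : ℝ => |z| ^ (α - 1)) 0 :=
        (Real.continuousAt_rpow_const |(0:ℝ)| (α - 1) (Or.inr (by linarith))).comp
          continuous_abs.continuousAt
      have := hcont.tendsto
      simp only [abs_zero, Real.zero_rpow (by linarith : α - 1 ≠ 0)] at this
      exact this.mono_left nhdsWithin_le_nhds
  · -- 0 < y
    have h2 : (fun z : ℝ => max (-z) 0 ^ α) =ᶠ[nhds y] fun _ : ℝ => (0:ℝ) ^ α := by
      filter_upwards [eventually_gt_nhds hy] with z hz
      rw [max_eq_right (by linarith : -z ≤ (0:ℝ))]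
    have h3 := (hasDerivAt_const y ((0:ℝ) ^ α)).congr_of_eventuallyEq h2
    have : -(α * max (-y) 0 ^ (α - 1)) = 0 := by
      rw [max_eq_right (by linarith : -y ≤ (0:ℝ)), Real.zero_rpow (by linarith : α - 1 ≠ 0)]
      ring
    rwa [this]

lemma constIneq {t : ℝ} (ht : 5 ≤ t) : (t/4) ^ (2/(t-1)) ≤ (t/2) ^ (2/t) := by
  have h4 : (0:ℝ) < t/4 := by linarith
  have h2 : (0:ℝ) < t/2 := by linarith
  rw [← Real.log_le_log_iff (Real.rpow_pos_of_pos h4 _) (Real.rpow_pos_of_pos h2 _),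
    Real.log_rpow h4, Real.log_rpow h2]
  have hlog : Real.log (t/4) = Real.log (t/2) - Real.log 2 := by
    rw [show t/4 = (t/2)/2 by ring, Real.log_div (ne_of_gt h2) two_ne_zero]
  have key : Real.log (t/2) ≤ t * Real.log 2 := by
    have h1 := Real.log_le_sub_one_of_pos h2
    nlinarith [Real.log_two_gt_d9]
  rw [hlog, div_mul_eq_mul_div, div_mul_eq_mul_div, div_le_div_iff₀ (by linarith) (by linarith)]
  nlinarith [key]

lemma finalAlgebra {p A B I K : ℝ} (hp : 1 < p) (hA : 0 ≤ A) (hB : 0 ≤ B) (hI : 0 ≤ I)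
    (hK : 0 ≤ K) (h1 : I ≤ K ^ (2/(3*p+2)) * B)
    (h2 : K ≤ ((3*p+2)/4) * A ^ ((1:ℝ)/2) * I ^ ((1:ℝ)/2)) :
    I ≤ ((3*p+2)/2) ^ (2/(3*p+2)) * A ^ (1/(3*p+1)) * B ^ ((3*p+2)/(3*p+1)) := by
  have ht : (5:ℝ) ≤ 3*p+2 := by linarith
  set t := 3*p+2 with htdef
  have ht0 : (0:ℝ) < t := by linarith
  have ht1 : (0:ℝ) < t - 1 := by linarith
  have h31 : 3*p+1 = t - 1 := by rw [htdef]; ring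
  rw [h31]
  rcases eq_or_lt_of_le hI with hI0 | hIpos
  · rw [← hI0]
    positivity
  -- expand the bound on K ^ (2/t)
  have e1 : K ^ (2/t) ≤ ((t/4) * A ^ ((1:ℝ)/2) * I ^ ((1:ℝ)/2)) ^ (2/t) :=
    Real.rpow_le_rpow hK h2 (by positivity)
  have e2 : ((t/4) * A ^ ((1:ℝ)/2) * I ^ ((1:ℝ)/2)) ^ (2/t)
      = (t/4) ^ (2/t) * A ^ (1/t) * I ^ (1/t) := by
    rw [Real.mul_rpow (by positivity) (by positivity),
      Real.mul_rpow (by positivity) (by positivity),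
      ← Real.rpow_mul hA, ← Real.rpow_mul hI]
    rw [show (1:ℝ)/2 * (2/t) = 1/t by field_simp]
  have e3 : I ≤ ((t/4) ^ (2/t) * A ^ (1/t) * B) * I ^ (1/t) := by
    calc I ≤ K ^ (2/t) * B := h1
      _ ≤ ((t/4) ^ (2/t) * A ^ (1/t) * I ^ (1/t)) * B := by
          apply mul_le_mul_of_nonneg_right _ hB
          exact e1.trans_eq e2
      _ = ((t/4) ^ (2/t) * A ^ (1/t) * B) * I ^ (1/t) := by ring
  have hIt : (0:ℝ) < I ^ (1/t) := Real.rpow_pos_of_pos hIpos _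
  have e4 : I ^ ((t-1)/t) ≤ (t/4) ^ (2/t) * A ^ (1/t) * B := by
    have hsplit : I = I ^ ((t-1)/t) * I ^ (1/t) := by
      rw [← Real.rpow_add hIpos, show (t-1)/t + 1/t = 1 by field_simp; ring, Real.rpow_one]
    nth_rewrite 1 [hsplit] at e3
    exact le_of_mul_le_mul_right e3 hIt
  have e5 : I ≤ ((t/4) ^ (2/t) * A ^ (1/t) * B) ^ (t/(t-1)) := by
    have := Real.rpow_le_rpow (by positivity) e4 (by positivity : (0:ℝ) ≤ t/(t-1))
    rwa [← Real.rpow_mul hI, show (t-1)/t * (t/(t-1)) = 1 by field_simp, Real.rpow_one] at this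
  have e6 : ((t/4) ^ (2/t) * A ^ (1/t) * B) ^ (t/(t-1))
      = (t/4) ^ (2/(t-1)) * A ^ (1/(t-1)) * B ^ (t/(t-1)) := by
    rw [Real.mul_rpow (by positivity) hB, Real.mul_rpow (by positivity) (by positivity),
      ← Real.rpow_mul (by positivity : (0:ℝ) ≤ t/4), ← Real.rpow_mul hA]
    rw [show 2/t * (t/(t-1)) = 2/(t-1) by field_simp, show 1/t * (t/(t-1)) = 1/(t-1) by field_simp]
  have e7 : (t/4) ^ (2/(t-1)) * A ^ (1/(t-1)) * B ^ (t/(t-1))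
      ≤ (t/2) ^ (2/t) * A ^ (1/(t-1)) * B ^ (t/(t-1)) := by
    have := constIneq ht
    apply mul_le_mul_of_nonneg_right _ (by positivity)
    exact mul_le_mul_of_nonneg_right this (by positivity)
  calc I ≤ _ := e5
    _ = _ := e6
    _ ≤ _ := e7

lemma rpowTwoAbsAux (y : ℝ) : |y| ^ (2:ℝ) = y ^ 2 := by
  rw [show (2:ℝ) = ((2:ℕ):ℝ) by norm_num, Real.rpow_natCast, sq_abs]

lemma rpowTwoAux (y : ℝ) : y ^ (2:ℝ) = y ^ 2 := by
  rw [show (2:ℝ) = ((2:ℕ):ℝ) by norm_num, Real.rpow_natCast]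

theorem stmt_19 (p : ℝ) (hp : 1 < p) (g : ℝ → ℝ) (hg : ContDiff ℝ 1 g)
    (hlim : Tendsto g (Filter.cocompact ℝ) (nhds 0))
    (hint1 : IntegrableOn (fun x => |g x| ^ (2 * (p - 1)) * (deriv g x) ^ 2)
      {x : ℝ | g x < 0})
    (hint2 : IntegrableOn (fun x => |g x| ^ (p + 1)) {x : ℝ | g x < 0}) :
    (∫ x in {x : ℝ | g x < 0}, |g x| ^ (p + 2)) ≤
      ((3 * p + 2) / 2) ^ (2 / (3 * p + 2))
        * (∫ x in {x : ℝ | g x < 0}, |g x| ^ (2 * (p - 1)) * (deriv g x) ^ 2)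
            ^ (1 / (3 * p + 1))
        * (∫ x in {x : ℝ | g x < 0}, |g x| ^ (p + 1)) ^ ((3 * p + 2) / (3 * p + 1)) := by
  set S := {x : ℝ | g x < 0} with hSdef
  have hgc : Continuous g := hg.continuous
  have hdc : Continuous (deriv g) := hg.continuous_deriv le_rfl
  have hSopen : IsOpen S := isOpen_lt hgc continuous_const
  have hSm : MeasurableSet S := hSopen.measurableSet
  have hα1 : (1:ℝ) < (3*p+2)/2 := by linarith
  set α := (3*p+2)/2 with hαdef
  have hα0 : (0:ℝ) < α := by linarith
  set h : ℝ → ℝ := fun x => max (-g x) 0 with hhdef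
  set F : ℝ → ℝ := fun x => h x ^ α with hFdef
  set G : ℝ → ℝ := fun x => -(α * h x ^ (α-1)) * deriv g x with hGdef
  have hhc : Continuous h := (hgc.neg).max continuous_const
  have hh0 : ∀ x, 0 ≤ h x := fun x => le_max_right _ _
  have hhS : ∀ x ∈ S, h x = |g x| := by
    intro x hx
    have hx' : g x < 0 := hx
    rw [abs_of_neg hx', hhdef]
    exact max_eq_left (by linarith)
  have hgpos : ∀ x ∈ S, 0 < |g x| := fun x hx => abs_pos.mpr (ne_of_lt hx)
  have hderivF : ∀ x, HasDerivAt F (G x) x := by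
    intro x
    have h1 := (phiHasDeriv hα1 (g x)).comp x (hg.differentiable one_ne_zero x).hasDerivAt
    simpa [hFdef, hGdef, hhdef, Function.comp_def] using h1
  -- boundedness of g
  obtain ⟨M, hM0, hM⟩ : ∃ M, 0 ≤ M ∧ ∀ x, |g x| ≤ M := by
    have h1 : ∀ᶠ x in cocompact ℝ, g x ∈ Metric.closedBall 0 1 :=
      hlim (Metric.closedBall_mem_nhds 0 one_pos)
    obtain ⟨K, hKc, hK⟩ := (hasBasis_cocompact.eventually_iff).1 h1
    obtain ⟨C, hC⟩ := hKc.exists_bound_of_continuousOn hgc.continuousOn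
    refine ⟨max C 1, le_trans zero_le_one (le_max_right _ _), fun x => ?_⟩
    by_cases hx : x ∈ K
    · exact le_trans (by simpa [Real.norm_eq_abs] using hC x hx) (le_max_left _ _)
    · have h2 := hK hx
      have h3 : |g x| ≤ 1 := by
        simpa [Real.dist_eq] using Metric.mem_closedBall.1 h2
      exact h3.trans (le_max_right _ _)
  -- integrability of |g|^(p+2) on S
  have hIcont : Continuous fun x => |g x| ^ (p+2) :=
    contRpowAux (continuous_abs.comp hgc) (fun x => abs_nonneg _) (by linarith)
  have hIint : IntegrableOn (fun x => |g x| ^ (p+2)) S := by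
    apply Integrable.mono (hint2.const_mul M) hIcont.aestronglyMeasurable.restrict
    filter_upwards [ae_restrict_mem hSm] with x hx
    have hg1 : 0 < |g x| := hgpos x hx
    rw [Real.norm_eq_abs, Real.norm_eq_abs,
      abs_of_nonneg (Real.rpow_nonneg (abs_nonneg _) _),
      abs_of_nonneg (by positivity : (0:ℝ) ≤ M * |g x| ^ (p+1))]
    calc |g x| ^ (p+2) = |g x| * |g x| ^ (p+1) := by
          rw [show p+2 = 1+(p+1) by ring, Real.rpow_add hg1, Real.rpow_one]
      _ ≤ M * |g x| ^ (p+1) :=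
          mul_le_mul_of_nonneg_right (hM x) (Real.rpow_nonneg (abs_nonneg _) _)
  -- L2 functions
  set f1 : ℝ → ℝ := fun x => |g x| ^ (p-1) * deriv g x with hf1def
  set f2 : ℝ → ℝ := fun x => |g x| ^ ((p+2)/2) with hf2def
  have hf1c : Continuous f1 :=
    (contRpowAux (continuous_abs.comp hgc) (fun x => abs_nonneg _) (by linarith)).mul hdc
  have hf2c : Continuous f2 :=
    contRpowAux (continuous_abs.comp hgc) (fun x => abs_nonneg _) (by linarith)
  have hf2nn : ∀ x, 0 ≤ f2 x := fun x => Real.rpow_nonneg (abs_nonneg _) _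
  have hf1eq : ∀ x, f1 x ^ 2 = |g x| ^ (2*(p-1)) * (deriv g x) ^ 2 := by
    intro x
    rw [hf1def]
    dsimp only
    rw [mul_pow, ← Real.rpow_natCast (|g x| ^ (p-1)) 2, ← Real.rpow_mul (abs_nonneg _)]
    congr 1
    push_cast
    ring
  have hf2eq : ∀ x, f2 x ^ 2 = |g x| ^ (p+2) := by
    intro x
    rw [hf2def]
    dsimp only
    rw [← Real.rpow_natCast (|g x| ^ ((p+2)/2)) 2, ← Real.rpow_mul (abs_nonneg _)]
    congr 1
    push_cast
    ring
  have hf1sq : Integrable (fun x => f1 x ^ 2) (volume.restrict S) := by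
    have e : (fun x => f1 x ^ 2) = fun x => |g x| ^ (2*(p-1)) * (deriv g x) ^ 2 :=
      funext hf1eq
    rw [e]; exact hint1
  have hf2sq : Integrable (fun x => f2 x ^ 2) (volume.restrict S) := by
    have e : (fun x => f2 x ^ 2) = fun x => |g x| ^ (p+2) := funext hf2eq
    rw [e]; exact hIint
  have hf1L2 : MemLp f1 2 (volume.restrict S) :=
    (memLp_two_iff_integrable_sq hf1c.aestronglyMeasurable.restrict).2 hf1sq
  have hf2L2 : MemLp f2 2 (volume.restrict S) :=
    (memLp_two_iff_integrable_sq hf2c.aestronglyMeasurable.restrict).2 hf2sq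
  have hprod : Integrable (fun x => f1 x * f2 x) (volume.restrict S) := by
    have e2 : (1:ENNReal)/1 = 1/2 + 1/2 := by
      rw [ENNReal.div_add_div_same, one_div_one, show (1:ENNReal)+1 = 2 by norm_num]
      exact (ENNReal.div_self (by norm_num : (2:ENNReal) ≠ 0) (by norm_num : (2:ENNReal) ≠ ⊤)).symm
    haveI : ENNReal.HolderTriple 2 2 1 := ⟨by rw [inv_one]; exact ENNReal.inv_two_add_inv_two⟩
    have := hf2L2.smul hf1L2 (r := 1)
    rw [memLp_one_iff_integrable] at this
    simpa [smul_eq_mul, Pi.mul_def] using this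
  -- G vanishes off S, and pointwise bound on S
  have hGS : ∀ x ∉ S, G x = 0 := by
    intro x hx
    have hgx : 0 ≤ g x := not_lt.1 hx
    have hh' : h x = 0 := max_eq_right (by linarith)
    rw [hGdef]
    dsimp only
    rw [hh', Real.zero_rpow (by linarith : α - 1 ≠ 0)]
    ring
  have hGonS : ∀ x ∈ S, |G x| = α * (|f1 x| * f2 x) := by
    intro x hx
    have hgx := hgpos x hx
    have e : α - 1 = (p-1) + (p+2)/2 := by rw [hαdef]; ring
    rw [hGdef, hf1def, hf2def]
    dsimp only
    rw [hhS x hx, e, Real.rpow_add hgx, abs_mul, abs_neg, abs_mul, abs_of_pos hα0,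
      abs_mul, abs_of_nonneg (Real.rpow_nonneg (abs_nonneg _) _),
      abs_of_nonneg (Real.rpow_nonneg (abs_nonneg _) _), abs_mul,
      abs_of_nonneg (Real.rpow_nonneg (abs_nonneg _) _)]
    ring
  have hGcont : Continuous G :=
    ((continuous_const.mul (contRpowAux hhc hh0 (by linarith : (0:ℝ) < α - 1))).neg).mul hdc
  have hGint : Integrable G volume := by
    rw [← indicator_eq_self.2 (Function.support_subset_iff'.2 hGS)]
    rw [integrable_indicator_iff hSm]
    apply Integrable.mono (hprod.const_mul α) hGcont.aestronglyMeasurable.restrict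
    filter_upwards [ae_restrict_mem hSm] with x hx
    rw [Real.norm_eq_abs, Real.norm_eq_abs, hGonS x hx, abs_mul α (f1 x * f2 x),
      abs_of_pos hα0, abs_mul (f1 x) (f2 x), abs_of_nonneg (hf2nn x)]
  -- FTC bound
  have hFcont : Continuous F := contRpowAux hhc hh0 hα0
  have hφc : Continuous (fun y : ℝ => max (-y) 0 ^ α) :=
    contRpowAux (continuous_neg.max continuous_const) (fun y => le_max_right _ _) hα0
  have hg_top : Tendsto g atTop (nhds 0) :=
    hlim.mono_left (by rw [cocompact_eq_atBot_atTop]; exact le_sup_right)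
  have hg_bot : Tendsto g atBot (nhds 0) :=
    hlim.mono_left (by rw [cocompact_eq_atBot_atTop]; exact le_sup_left)
  have hF_top : Tendsto F atTop (nhds 0) := by
    have := (hφc.tendsto 0).comp hg_top
    simpa [hFdef, hhdef, Function.comp_def, Real.zero_rpow (ne_of_gt hα0)] using this
  have hF_bot : Tendsto F atBot (nhds 0) := by
    have := (hφc.tendsto 0).comp hg_bot
    simpa [hFdef, hhdef, Function.comp_def, Real.zero_rpow (ne_of_gt hα0)] using this
  have hFbound : ∀ a, F a ≤ (1/2) * ∫ x, |G x| := by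
    intro a
    have e1 : ∫ x in Iic a, G x = F a - 0 :=
      integral_Iic_of_hasDerivAt_of_tendsto hFcont.continuousWithinAt
        (fun x _ => hderivF x) hGint.integrableOn hF_bot
    have e2 : ∫ x in Ioi a, G x = 0 - F a :=
      integral_Ioi_of_hasDerivAt_of_tendsto hFcont.continuousWithinAt
        (fun x _ => hderivF x) hGint.integrableOn hF_top
    have habs : Integrable (fun x => |G x|) volume := hGint.abs
    have h3 : |∫ x in Iic a, G x| ≤ ∫ x in Iic a, |G x| := by
      simpa [Real.norm_eq_abs] using
        norm_integral_le_integral_norm (μ := volume.restrict (Iic a)) G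
    have h4 : |∫ x in Ioi a, G x| ≤ ∫ x in Ioi a, |G x| := by
      simpa [Real.norm_eq_abs] using
        norm_integral_le_integral_norm (μ := volume.restrict (Ioi a)) G
    have h5 : (∫ x in Iic a, |G x|) + ∫ x in Ioi a, |G x| = ∫ x, |G x| :=
      intervalIntegral.integral_Iic_add_Ioi habs.integrableOn habs.integrableOn
    rw [e1] at h3
    rw [e2] at h4
    have h6 := (abs_le.1 h3).2
    have h7 := (abs_le.1 h4).1
    linarith
  set Kv := (1/2) * ∫ x, |G x| with hKvdef
  have hKnn : 0 ≤ Kv := by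
    rw [hKvdef]
    have : 0 ≤ ∫ x, |G x| := integral_nonneg fun x => abs_nonneg _
    linarith
  -- name the three integrals
  set IA := ∫ x in S, |g x| ^ (2*(p-1)) * (deriv g x) ^ 2 with hIAdef
  set IB := ∫ x in S, |g x| ^ (p+1) with hIBdef
  set II := ∫ x in S, |g x| ^ (p+2) with hIIdef
  have hAnn : 0 ≤ IA := setIntegral_nonneg hSm fun x _ => by positivity
  have hBnn : 0 ≤ IB := setIntegral_nonneg hSm fun x _ =>
    Real.rpow_nonneg (abs_nonneg _) _
  have hInn : 0 ≤ II := setIntegral_nonneg hSm fun x _ =>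
    Real.rpow_nonneg (abs_nonneg _) _
  -- Cauchy-Schwarz
  have hCS : ∫ x in S, |f1 x| * f2 x ≤ IA ^ ((1:ℝ)/2) * II ^ ((1:ℝ)/2) := by
    have hpq : Real.HolderConjugate 2 2 := by
      rw [Real.holderConjugate_iff]
      norm_num
    have h2e : ENNReal.ofReal (2:ℝ) = 2 := by
      rw [ENNReal.ofReal_ofNat]
    have hm1 : MemLp (fun x => |f1 x|) (ENNReal.ofReal (2:ℝ)) (volume.restrict S) := by
      rw [h2e]
      simpa [Real.norm_eq_abs] using hf1L2.norm
    have hm2 : MemLp f2 (ENNReal.ofReal (2:ℝ)) (volume.restrict S) := by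
      rw [h2e]; exact hf2L2
    have hCS0 := integral_mul_le_Lp_mul_Lq_of_nonneg hpq
      (Eventually.of_forall fun x => abs_nonneg (f1 x))
      (Eventually.of_forall fun x => hf2nn x) hm1 hm2
    have eA : ∫ x in S, |f1 x| ^ (2:ℝ) = IA := by
      apply integral_congr_ae (Eventually.of_forall fun x => ?_)
      rw [rpowTwoAbsAux, hf1eq]
    have eI : ∫ x in S, f2 x ^ (2:ℝ) = II := by
      apply integral_congr_ae (Eventually.of_forall fun x => ?_)
      rw [rpowTwoAux, hf2eq]
    rw [eA, eI] at hCS0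
    exact hCS0
  have hGbound : (∫ x, |G x|) ≤ α * (IA ^ ((1:ℝ)/2) * II ^ ((1:ℝ)/2)) := by
    have hzero : ∀ x ∉ S, |G x| = 0 := fun x hx => by rw [hGS x hx, abs_zero]
    rw [← setIntegral_eq_integral_of_forall_compl_eq_zero hzero]
    calc ∫ x in S, |G x| = ∫ x in S, α * (|f1 x| * f2 x) :=
          setIntegral_congr_fun hSm fun x hx => hGonS x hx
      _ = α * ∫ x in S, |f1 x| * f2 x := integral_const_mul α _
      _ ≤ α * (IA ^ ((1:ℝ)/2) * II ^ ((1:ℝ)/2)) :=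
          mul_le_mul_of_nonneg_left hCS hα0.le
  have hKbound : Kv ≤ ((3*p+2)/4) * IA ^ ((1:ℝ)/2) * II ^ ((1:ℝ)/2) := by
    have := mul_le_mul_of_nonneg_left hGbound (by norm_num : (0:ℝ) ≤ 1/2)
    rw [hKvdef]
    calc (1/2) * ∫ x, |G x| ≤ (1/2) * (α * (IA ^ ((1:ℝ)/2) * II ^ ((1:ℝ)/2))) := this
      _ = ((3*p+2)/4) * IA ^ ((1:ℝ)/2) * II ^ ((1:ℝ)/2) := by rw [hαdef]; ring
  -- main pointwise bound and conclusion
  have h1 : II ≤ Kv ^ (2/(3*p+2)) * IB := by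
    have hmono : ∀ x ∈ S, |g x| ^ (p+2) ≤ Kv ^ (2/(3*p+2)) * |g x| ^ (p+1) := by
      intro x hx
      have hgx := hgpos x hx
      have hFx : |g x| = F x ^ (1/α) := by
        rw [hFdef]
        dsimp only
        rw [hhS x hx, one_div, Real.rpow_rpow_inv (abs_nonneg _) (ne_of_gt hα0)]
      have hFK : F x ^ (1/α) ≤ Kv ^ (1/α) :=
        Real.rpow_le_rpow (Real.rpow_nonneg (hh0 x) _) (hFbound x) (by positivity)
      have h1α : 1/α = 2/(3*p+2) := by rw [hαdef, one_div_div]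
      calc |g x| ^ (p+2) = |g x| * |g x| ^ (p+1) := by
            rw [show p+2 = 1+(p+1) by ring, Real.rpow_add hgx, Real.rpow_one]
        _ ≤ Kv ^ (2/(3*p+2)) * |g x| ^ (p+1) := by
            apply mul_le_mul_of_nonneg_right _ (Real.rpow_nonneg (abs_nonneg _) _)
            rw [hFx, ← h1α]
            exact hFK
    calc II ≤ ∫ x in S, Kv ^ (2/(3*p+2)) * |g x| ^ (p+1) :=
          setIntegral_mono_on hIint (hint2.const_mul _) hSm hmono
      _ = Kv ^ (2/(3*p+2)) * IB := integral_const_mul _ _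
  exact finalAlgebra hp hAnn hBnn hInn hKnn h1 hKbound
end
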